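/- Let G consist of p disjoint chains of nodes with costs ±1 (+1 for P-operations, −1 for V-operations), and let v, w be nodes in distinct chains C_i, C_j. Then there exists a valid subschedule of G in which v precedes w if and only if there exists a cut Γ of G with Γ(j) = w, Γ(i) succeeding or equal to v, such that G[Γ] has a j-schedule of height 0. -/

import Mathlib

def cost (L : List ℤ) : ℤ := L.sum

def height (L : List ℤ) : ℤ :=
  ((List.range (L.length + 1)).map fun k => (L.take k).sum).foldr max 0

def fall (L : List ℤ) : ℤ := height L - cost L

variable {p : ℕ}

/-- Realize a word of chain indices as the sequence of node costs obtained by,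
at each step, consuming the next unused node of the indicated chain. -/
def realize (C : Fin p → List ℤ) : List (Fin p) → List ℤ
  | [] => []
  | i :: w => (C i).headD 0 :: realize (Function.update C i (C i).tail) w

/-- A schedule of the chain graph `C`: a word using each chain exactly up to
its length (a linear extension, realized chainwise). -/
def IsSched (C : Fin p → List ℤ) (w : List (Fin p)) : Prop :=
  ∀ i, w.count i = (C i).length

/-- A subschedule: a prefix of some schedule. -/
def IsSub (C : Fin p → List ℤ) (w : List (Fin p)) : Prop :=
  ∀ i, w.count i ≤ (C i).length

/-- positions in `u` at which chain `i` is scheduled. -/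
def occIdx (u : List (Fin p)) (i : Fin p) : List ℕ :=
  (List.range u.length).filter fun t => decide (u[t]? = some i)

/-- In the word `u`, node number `a` (0-based) of chain `i` occurs before node
number `b` of chain `j`. -/
def Precedes (u : List (Fin p)) (i : Fin p) (a : ℕ) (j : Fin p) (b : ℕ) : Prop :=
  ∃ s t, (occIdx u i)[a]? = some s ∧ (occIdx u j)[b]? = some t ∧ s < t

/-- A subschedule is valid when, at every prefix, the number of `P` operations
(+1) does not exceed the number of `V` operations (−1). -/
def ValidWord (C : Fin p → List ℤ) (u : List (Fin p)) : Prop :=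
  ∀ t, ((realize C u).take t).sum ≤ 0

-- auxiliary lemmas

lemma occIdx_append (u v : List (Fin p)) (k : Fin p) :
    occIdx (u ++ v) k = occIdx u k ++ (occIdx v k).map (u.length + ·) := by
  unfold occIdx
  rw [List.length_append, List.range_add, List.filter_append, List.filter_map]
  congr 1
  · apply List.filter_congr
    intro t ht
    rw [List.mem_range] at ht
    rw [List.getElem?_append_left ht]
  · congr 1
    apply List.filter_congr
    intro t _
    simp only [Function.comp]
    rw [List.getElem?_append_right (Nat.le_add_right _ _), Nat.add_sub_cancel_left]

lemma occIdx_singleton (x k : Fin p) :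
    occIdx [x] k = if x = k then [0] else [] := by
  by_cases h : x = k <;>
    simp [occIdx, h, List.range_succ, List.filter_cons]

lemma length_occIdx (u : List (Fin p)) (k : Fin p) :
    (occIdx u k).length = u.count k := by
  induction u with
  | nil => simp [occIdx]
  | cons x u ih =>
    have : (x :: u) = [x] ++ u := rfl
    rw [this, occIdx_append, List.length_append, List.length_map, ih,
      occIdx_singleton, List.count_append]
    by_cases h : x = k <;> simp [h, List.count_singleton, Nat.add_comm]

lemma occIdx_nodup (u : List (Fin p)) (k : Fin p) : (occIdx u k).Nodup :=
  List.nodup_range.filter _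

lemma occIdx_head (v : List (Fin p)) (k : Fin p) (h : v[0]? = some k) :
    (occIdx v k)[0]? = some 0 := by
  cases v with
  | nil => simp at h
  | cons x v =>
    have hx : x = k := by simpa using h
    subst hx
    have : (x :: v) = [x] ++ v := rfl
    rw [this, occIdx_append, occIdx_singleton, if_pos rfl]
    simp

lemma occIdx_spec {u : List (Fin p)} {k : Fin p} {s a : ℕ}
    (hs : s < u.length) (hu : u[s]? = some k) (hc : (u.take s).count k = a) :
    (occIdx u k)[a]? = some s := by
  conv_lhs => rw [← List.take_append_drop s u]
  rw [occIdx_append]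
  have hlen : (occIdx (u.take s) k).length = a := by rw [length_occIdx, hc]
  have hlt : (u.take s).length = s := by rw [List.length_take]; omega
  rw [List.getElem?_append_right (le_of_eq hlen)]
  have hz : a - (occIdx (u.take s) k).length = 0 := by omega
  rw [hz, List.getElem?_map]
  have hh : (u.drop s)[0]? = some k := by rw [List.getElem?_drop]; simpa using hu
  rw [occIdx_head _ _ hh]
  simp [hlt]

lemma occIdx_spec_rev {u : List (Fin p)} {k : Fin p} {s a : ℕ}
    (h : (occIdx u k)[a]? = some s) :
    s < u.length ∧ u[s]? = some k ∧ (u.take s).count k = a := by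
  have halt : a < (occIdx u k).length := by
    rcases List.getElem?_eq_some_iff.mp h with ⟨h1, _⟩; exact h1
  have hmem : s ∈ occIdx u k := by
    rcases List.getElem?_eq_some_iff.mp h with ⟨h1, h2⟩
    rw [← h2]; exact List.getElem_mem _
  have hmem' := hmem
  unfold occIdx at hmem'
  rw [List.mem_filter, List.mem_range] at hmem'
  obtain ⟨h1, h2⟩ := hmem'
  have h2' : u[s]? = some k := by simpa using h2
  refine ⟨h1, h2', ?_⟩
  have h' := occIdx_spec h1 h2' rfl
  exact ((List.getElem?_inj halt (occIdx_nodup u k)).mp (h.trans h'.symm)).symm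

lemma take_succ_headD (L : List ℤ) (n : ℕ) : (L.take (n + 1)).headD 0 = L.headD 0 := by
  cases L <;> simp

lemma take_succ_tail (L : List ℤ) (n : ℕ) : (L.take (n + 1)).tail = L.tail.take n := by
  cases L <;> simp

lemma realize_take (C : Fin p → List ℤ) (u : List (Fin p)) (n : ℕ) :
    realize C (u.take n) = (realize C u).take n := by
  induction u generalizing C n with
  | nil => simp [realize]
  | cons x w ih =>
    cases n with
    | zero => simp [realize]
    | succ n => simp [realize, ih]

lemma realize_congr {C D : Fin p → List ℤ} {u : List (Fin p)}
    (h : ∀ k, (C k).take (u.count k) = (D k).take (u.count k)) :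
    realize C u = realize D u := by
  induction u generalizing C D with
  | nil => rfl
  | cons x w ih =>
    have hx := h x
    rw [List.count_cons_self] at hx
    simp only [realize]
    refine congrArg₂ List.cons ?_ ?_
    case _ =>
      have := congrArg (·.headD 0) hx
      simp only [take_succ_headD] at this
      exact this
    case _ =>
      apply ih
      intro k
      by_cases hk : k = x
      · subst hk
        simp only [Function.update_self]
        have := congrArg List.tail hx
        simpa [take_succ_tail] using this
      · rw [Function.update_of_ne hk, Function.update_of_ne hk]
        have hc : (x :: w).count k = w.count k := by
          rw [List.count_cons]; simp [Ne.symm hk]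
        have := h k
        rwa [hc] at this

lemma foldr_max_nonneg (l : List ℤ) : 0 ≤ l.foldr max 0 := by
  induction l with
  | nil => simp
  | cons x l ih => exact le_max_of_le_right ih

lemma foldr_max_le_zero_iff (l : List ℤ) : l.foldr max 0 ≤ 0 ↔ ∀ x ∈ l, x ≤ 0 := by
  induction l with
  | nil => simp
  | cons x l ih => simp [max_le_iff, ih]

lemma height_eq_zero_iff (L : List ℤ) : height L = 0 ↔ ∀ t, (L.take t).sum ≤ 0 := by
  unfold height
  constructor
  · intro h t
    have hall := (foldr_max_le_zero_iff _).mp h.le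
    by_cases ht : t ≤ L.length
    · exact hall _ (List.mem_map.mpr ⟨t, List.mem_range.mpr (by omega), rfl⟩)
    · rw [List.take_of_length_le (by omega)]
      have := hall _ (List.mem_map.mpr ⟨L.length, List.mem_range.mpr (by omega), rfl⟩)
      rwa [List.take_length] at this
  · intro h
    have h1 := foldr_max_nonneg ((List.range (L.length + 1)).map fun k => (L.take k).sum)
    have h2 := (foldr_max_le_zero_iff ((List.range (L.length + 1)).map fun k => (L.take k).sum)).mpr ?_
    · omega
    · intro x hx
      rcases List.mem_map.mp hx with ⟨t, _, rfl⟩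
      exact h t

/-- There is a valid subschedule in which `v` (node `a` of chain `i`) precedes
`w` (node `b` of chain `j`) iff some cut `Γ` with `Γ j = w` and `Γ i` weakly
succeeding `v` admits a `j`-terminal schedule of its prefix subgraph of
height `0`. -/
theorem race_iff_cut (C : Fin p → List ℤ)
    (hpm : ∀ k, ∀ x ∈ C k, x = 1 ∨ x = -1)
    (i j : Fin p) (hij : i ≠ j) (a b : ℕ)
    (ha : a < (C i).length) (hb : b < (C j).length) :
    (∃ u, IsSub C u ∧ ValidWord C u ∧ Precedes u i a j b) ↔
      ∃ Γ : Fin p → ℕ, (∀ k, Γ k ≤ (C k).length) ∧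
        Γ j = b + 1 ∧ a + 1 ≤ Γ i ∧
        ∃ w, IsSched (fun k => (C k).take (Γ k)) w ∧ w.getLast? = some j ∧
          height (realize (fun k => (C k).take (Γ k)) w) = 0 := by
  constructor
  · rintro ⟨u, hsub, hval, s, t, hsu, htu, hst⟩
    obtain ⟨hslen, hus, hcs⟩ := occIdx_spec_rev hsu
    obtain ⟨htlen, hut, hct⟩ := occIdx_spec_rev htu
    set u' : List (Fin p) := u.take (t + 1) with hu'
    have hsub' : ∀ k, u'.count k ≤ (C k).length := fun k =>
      le_trans ((List.take_sublist _ _).count_le k) (hsub k)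
    have hsplit : u' = u.take t ++ [j] := by
      rw [hu', List.take_succ, hut]; rfl
    refine ⟨fun k => u'.count k, hsub', ?_, ?_, u', ?_, ?_, ?_⟩
    · show u'.count j = b + 1
      rw [hsplit, List.count_append, hct]
      simp
    · have h1 : u.take (s + 1) = u'.take (s + 1) := by
        rw [hu', List.take_take, min_eq_left (by omega)]
      have h2 : (u.take (s + 1)).count i = a + 1 := by
        rw [List.take_succ, hus, List.count_append, hcs]
        simp
      rw [← h2, h1]
      exact (List.take_sublist _ _).count_le i
    · intro k
      rw [List.length_take, min_eq_left (hsub' k)]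
    · rw [hsplit]
      exact List.getLast?_concat
    · have hre : realize (fun k => (C k).take (u'.count k)) u' = realize C u' := by
        apply realize_congr
        intro k
        rw [List.take_take, min_self]
      rw [hre, hu', realize_take]
      rw [height_eq_zero_iff]
      intro t'
      rw [List.take_take]
      exact hval _
  · rintro ⟨Γ, hΓ, hΓj, hΓi, w, hsched, hlast, hh⟩
    have hcount : ∀ k, w.count k = Γ k := fun k => by
      have := hsched k
      rwa [List.length_take, min_eq_left (hΓ k)] at this
    have hre : realize (fun k => (C k).take (Γ k)) w = realize C w := by
      apply realize_congr
      intro k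
      rw [hcount k, List.take_take, min_self]
    have hval : ValidWord C w := by
      intro t
      rw [← hre]
      exact (height_eq_zero_iff _).mp hh t
    refine ⟨w, fun k => (hcount k) ▸ hΓ k, hval, ?_⟩
    have hne : w ≠ [] := by
      intro h; rw [h] at hlast; simp at hlast
    have hn : 1 ≤ w.length := List.length_pos_iff.mpr hne
    have hwt : w[w.length - 1]? = some j := by
      rw [← List.getLast?_eq_getElem?]; exact hlast
    have hsplit : w = w.take (w.length - 1) ++ [j] := by
      conv_lhs => rw [← (List.take_length : w.take w.length = w)]
      rw [show w.length = (w.length - 1) + 1 by omega, List.take_succ, hwt]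
      rw [show (w.length -1) + 1 = w.length by omega]
      rfl
    have htake : (w.take (w.length - 1)).count j = b := by
      have : w.count j = (w.take (w.length - 1)).count j + 1 := by
        conv_lhs => rw [hsplit]
        simp [List.count_append]
      have hcj : w.count j = b + 1 := by rw [hcount j, hΓj]
      omega
    have ht : (occIdx w j)[b]? = some (w.length - 1) :=
      occIdx_spec (by omega) hwt htake
    have hai : a < (occIdx w i).length := by
      rw [length_occIdx, hcount]; omega
    obtain ⟨s, hs⟩ : ∃ s, (occIdx w i)[a]? = some s :=
      ⟨_, List.getElem?_eq_getElem hai⟩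
    obtain ⟨hslen, hws, -⟩ := occIdx_spec_rev hs
    refine ⟨s, w.length - 1, hs, ht, ?_⟩
    have hne' : s ≠ w.length - 1 := by
      intro h
      rw [h, hwt] at hws
      exact hij (Option.some.inj hws).symm
    omega
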